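/- For every n ∈ ℕ, every tuple of real numbers a_1,…,a_n, and every ε > 0, there exists δ > 0 such that for all real numbers b_1,…,b_n satisfying |Σ_{i=1}^n a_i^k − Σ_{i=1}^n b_i^k| < δ for every k ∈ {1,…,n}, there exists a permutation π of {1,…,n} with |a_i − b_{π(i)}| < ε for every i. -/

import Mathlib

open List Finset Polynomial

lemma newton_real {n : ℕ} (f : Fin n → ℝ) (k : ℕ) :
    (k : ℝ) * (Multiset.map f Finset.univ.val).esymm k = (-1) ^ (k + 1) *
      ∑ p ∈ (Finset.HasAntidiagonal.antidiagonal k).filter (fun p => p.1 < k),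
        (-1) ^ p.1 * (Multiset.map f Finset.univ.val).esymm p.1 * ∑ i, f i ^ p.2 := by
  have h := congrArg (MvPolynomial.aeval f) (MvPolynomial.mul_esymm_eq_sum (Fin n) ℝ k)
  simpa [MvPolynomial.psum, MvPolynomial.aeval_esymm_eq_multiset_esymm, map_sum, map_pow,
    map_mul, MvPolynomial.aeval_X] using h

lemma esymm_eq_of_psum_eq {n : ℕ} {a b : Fin n → ℝ}
    (h : ∀ k ∈ Finset.Icc 1 n, (∑ i, a i ^ k) = ∑ i, b i ^ k) :
    ∀ k, k ≤ n → (Multiset.map a Finset.univ.val).esymm k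
      = (Multiset.map b Finset.univ.val).esymm k := by
  intro k
  induction k using Nat.strong_induction_on with
  | _ k ih =>
    intro hk
    rcases Nat.eq_zero_or_pos k with rfl | hk0
    · simp [Multiset.esymm]
    · have hka : (k : ℝ) * (Multiset.map a Finset.univ.val).esymm k
          = (k : ℝ) * (Multiset.map b Finset.univ.val).esymm k := by
        rw [newton_real, newton_real]
        congr 1
        apply Finset.sum_congr rfl
        intro p hp
        simp only [Finset.mem_filter, Finset.HasAntidiagonal.mem_antidiagonal] at hp
        rw [ih p.1 hp.2 (le_trans (le_of_lt hp.2) hk),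
          h p.2 (Finset.mem_Icc.mpr ⟨by omega, by omega⟩)]
      exact mul_left_cancel₀ (by exact_mod_cast hk0.ne') hka

lemma multiset_eq_of_psum_eq {n : ℕ} {a b : Fin n → ℝ}
    (h : ∀ k ∈ Finset.Icc 1 n, (∑ i, a i ^ k) = ∑ i, b i ^ k) :
    Multiset.map a Finset.univ.val = Multiset.map b Finset.univ.val := by
  set Ma := Multiset.map a Finset.univ.val with hMa
  set Mb := Multiset.map b Finset.univ.val with hMb
  have hca : Multiset.card Ma = n := by simp [hMa]
  have hcb : Multiset.card Mb = n := by simp [hMb]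
  have hprod : (Ma.map fun t => X - C t).prod = (Mb.map fun t => X - C t).prod := by
    have hdega : ((Ma.map fun t => X - C t).prod).natDegree = n := by
      rw [Polynomial.natDegree_multiset_prod_X_sub_C_eq_card, hca]
    have hdegb : ((Mb.map fun t => X - C t).prod).natDegree = n := by
      rw [Polynomial.natDegree_multiset_prod_X_sub_C_eq_card, hcb]
    ext m
    rcases le_or_gt m n with hm | hm
    · rw [Multiset.prod_X_sub_C_coeff Ma (hca ▸ hm), Multiset.prod_X_sub_C_coeff Mb (hcb ▸ hm),
        hca, hcb, esymm_eq_of_psum_eq h _ (Nat.sub_le _ _)]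
    · rw [Polynomial.coeff_eq_zero_of_natDegree_lt (hdega ▸ hm),
        Polynomial.coeff_eq_zero_of_natDegree_lt (hdegb ▸ hm)]
  calc Ma = ((Ma.map fun t => X - C t).prod).roots :=
        (Polynomial.roots_multiset_prod_X_sub_C Ma).symm
    _ = ((Mb.map fun t => X - C t).prod).roots := by rw [hprod]
    _ = Mb := Polynomial.roots_multiset_prod_X_sub_C Mb

lemma exists_perm_of_map_eq {n : ℕ} {a b : Fin n → ℝ}
    (h : Multiset.map a Finset.univ.val = Multiset.map b Finset.univ.val) :
    ∃ π : Equiv.Perm (Fin n), ∀ i, a i = b (π i) := by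
  have hperm : List.ofFn a ~ List.ofFn b := by
    rw [← Multiset.coe_eq_coe]
    simpa [← Fin.univ_val_map] using h
  have hA : List.ofFn (a ∘ Tuple.sort a) = List.ofFn (b ∘ Tuple.sort b) := by
    refine (fun h1 h2 h3 => List.Perm.eq_of_sortedLE h2 h3 h1) ?_ ?_ ?_
    · calc List.ofFn (a ∘ Tuple.sort a) ~ List.ofFn a := Equiv.Perm.ofFn_comp_perm _ a
        _ ~ List.ofFn b := hperm
        _ ~ List.ofFn (b ∘ Tuple.sort b) := (Equiv.Perm.ofFn_comp_perm _ b).symm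
    · exact (Tuple.monotone_sort a).sortedLE_ofFn
    · exact (Tuple.monotone_sort b).sortedLE_ofFn
  have hf : a ∘ Tuple.sort a = b ∘ Tuple.sort b := List.ofFn_injective hA
  refine ⟨(Tuple.sort a).symm.trans (Tuple.sort b), fun i => ?_⟩
  have := congrFun hf ((Tuple.sort a).symm i)
  simpa using this

/-- Multiset of reals depends continuously on its first `n` power sums. -/
theorem powerSums_continuously_determine_tuple
    (n : ℕ) (a : Fin n → ℝ) (ε : ℝ) (hε : 0 < ε) :
    ∃ δ > (0 : ℝ), ∀ b : Fin n → ℝ,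
      (∀ k ∈ Finset.Icc 1 n, |(∑ i, a i ^ k) - ∑ i, b i ^ k| < δ) →
      ∃ π : Equiv.Perm (Fin n), ∀ i, |a i - b (π i)| < ε := by
  rcases Nat.lt_or_ge n 2 with hn | hn
  · interval_cases n
    · exact ⟨1, one_pos, fun b _ => ⟨1, fun i => i.elim0⟩⟩
    · refine ⟨ε, hε, fun b hb => ⟨1, fun i => ?_⟩⟩
      have h1 := hb 1 (by simp)
      simp only [pow_one, Fin.sum_univ_one] at h1
      have hi : i = 0 := Subsingleton.elim i 0
      rw [hi]
      simpa using h1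
  · set U : Set (Fin n → ℝ) := {b | ∃ π : Equiv.Perm (Fin n), ∀ i, |a i - b (π i)| < ε} with hU
    have hUopen : IsOpen U := by
      have hrw : U = ⋃ π : Equiv.Perm (Fin n), ⋂ i, {b : Fin n → ℝ | |a i - b (π i)| < ε} := by
        ext b
        simp [hU, Set.mem_iUnion, Set.mem_iInter]
      rw [hrw]
      refine isOpen_iUnion fun π => isOpen_iInter_of_finite fun i => ?_
      have hc : Continuous fun b : Fin n → ℝ => |a i - b (π i)| := by fun_prop
      exact isOpen_lt hc continuous_const
    set R := Real.sqrt ((∑ i, a i ^ 2) + 1) with hR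
    set K := Metric.closedBall (0 : Fin n → ℝ) R with hKdef
    have hK : IsCompact K := isCompact_closedBall _ _
    set f : (Fin n → ℝ) → (Fin n → ℝ) := fun b k => ∑ i, b i ^ ((k : ℕ) + 1) with hfdef
    have hf : Continuous f := continuous_pi fun k => by fun_prop
    set C := f '' (K \ U) with hC
    have hCcomp : IsCompact C := (hK.diff hUopen).image hf
    have hfa : f a ∉ C := by
      rintro ⟨b, hbKU, hfb⟩
      apply hbKU.2
      have hps : ∀ k ∈ Finset.Icc 1 n, (∑ i, a i ^ k) = ∑ i, b i ^ k := by
        intro k hk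
        simp only [Finset.mem_Icc] at hk
        have hck := congrFun hfb ⟨k - 1, by omega⟩
        simp only [hfdef] at hck
        rw [Nat.sub_add_cancel hk.1] at hck
        exact hck.symm
      obtain ⟨π, hπ⟩ := exists_perm_of_map_eq (multiset_eq_of_psum_eq hps)
      exact ⟨π, fun i => by rw [hπ i]; simpa using hε⟩
    obtain ⟨r, hr, hball⟩ := Metric.isOpen_iff.mp hCcomp.isClosed.isOpen_compl (f a) hfa
    refine ⟨min r 1, lt_min hr one_pos, fun b hb => ?_⟩
    have hbK : b ∈ K := by
      have h2 := hb 2 (Finset.mem_Icc.mpr ⟨one_le_two, hn⟩)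
      have habs := abs_lt.mp (lt_of_lt_of_le h2 (min_le_right _ _))
      have hsum : ∑ i, b i ^ 2 ≤ (∑ i, a i ^ 2) + 1 := by linarith [habs.1]
      simp only [hKdef, Metric.mem_closedBall, dist_zero_right]
      rw [pi_norm_le_iff_of_nonneg (Real.sqrt_nonneg _)]
      intro i
      rw [Real.norm_eq_abs, ← Real.sqrt_sq_eq_abs]
      apply Real.sqrt_le_sqrt
      have hle : b i ^ 2 ≤ ∑ j, b j ^ 2 :=
        Finset.single_le_sum (fun j _ => sq_nonneg (b j)) (Finset.mem_univ i)
      linarith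
    have hdist : dist (f b) (f a) < r := by
      rw [dist_pi_lt_iff hr]
      intro k
      have hk1 : (k : ℕ) + 1 ∈ Finset.Icc 1 n :=
        Finset.mem_Icc.mpr ⟨Nat.le_add_left 1 _, by omega⟩
      have hbk := hb ((k : ℕ) + 1) hk1
      rw [Real.dist_eq, abs_sub_comm]
      exact lt_of_lt_of_le hbk (min_le_left _ _)
    have hfbC : f b ∉ C := hball (Metric.mem_ball.mpr hdist)
    by_contra hbU
    exact hfbC ⟨b, ⟨hbK, hbU⟩, rfl⟩
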